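/- arXiv:1505.05184 — 4 statements merged into one kernel-verified Lean document; each statement's English description precedes it below -/
import Mathlib

section
/- Let n inspection stations have nonnegative costs a : Fin n → ℝ and pass probabilities p : Fin n → ℝ with 0 ≤ p i < 1 for all i, and set q i = 1 - p i. For a permutation ρ of Fin n define the expected inspection cost of the series system under the sequence ρ as E(ρ) = Σ_{i : Fin n} a(ρ(i)) · ∏_{j < i} p(ρ(j)). If σ is a permutation such that the ratios a(σ(i))/q(σ(i)) are nondecreasing in i (i.e., for all i ≤ k, a(σ(i))/q(σ(i)) ≤ a(σ(k))/q(σ(k))), then for every permutation τ of Fin n, E(σ) ≤ E(τ). -/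
/-- Expected inspection cost of a series system under inspection sequence `ρ`:
station `ρ i` is reached only if all earlier stations in the sequence were passed. -/
noncomputable def seriesCost {n : ℕ} (a p : Fin n → ℝ) (ρ : Equiv.Perm (Fin n)) : ℝ :=
  ∑ i : Fin n, a (ρ i) * ∏ j ∈ Finset.Iio i, p (ρ j)

namespace SeriesCostAux

variable {n : ℕ}

/-- Lexicographic-style measure on permutations, used for termination of bubble sort. -/
def mu (π : Equiv.Perm (Fin n)) : ℕ := ∑ i : Fin n, (π i : ℕ) * (n + 1) ^ (n - (i : ℕ))

lemma perm_eq_one (π : Equiv.Perm (Fin n))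
    (h : ∀ u v : Fin n, (v : ℕ) = (u : ℕ) + 1 → π u ≤ π v) : π = 1 := by
  have key : ∀ d i : ℕ, ∀ h2 : i + d < n, π ⟨i, by omega⟩ ≤ π ⟨i + d, h2⟩ := by
    intro d
    induction d with
    | zero => intro i h2; exact le_refl _
    | succ d ih =>
      intro i h2
      have h3 : i + d < n := by omega
      exact le_trans (ih i h3) (h ⟨i + d, h3⟩ ⟨i + d + 1, by omega⟩ rfl)
  have hmono : Monotone π := by
    intro i k hik
    rcases i with ⟨i, hi⟩; rcases k with ⟨k, hk⟩
    have hik' : i ≤ k := hik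
    obtain ⟨d, rfl⟩ : ∃ d, k = i + d := ⟨k - i, by omega⟩
    exact key d i hk
  have hsm : StrictMono π := hmono.strictMono_of_injective π.injective
  let e : Fin n ≃o Fin n := { toEquiv := π, map_rel_iff' := fun {a b} => hsm.le_iff_le }
  have he : e = OrderIso.refl (Fin n) := Subsingleton.elim _ _
  apply Equiv.ext
  intro i
  have := DFunLike.congr_fun he i
  simpa [e] using this

lemma Iio_succ_eq {u v : Fin n} (h : (v : ℕ) = (u : ℕ) + 1) :
    Finset.Iio v = insert u (Finset.Iio u) := by
  ext j
  simp only [Finset.mem_Iio, Finset.mem_insert, Fin.lt_def, Fin.ext_iff]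
  omega

lemma swap_step (b r : Fin n → ℝ) (hb : ∀ i, 0 ≤ b i) (hr0 : ∀ i, 0 ≤ r i)
    (hr1 : ∀ i, r i < 1)
    (hmono : ∀ i k : Fin n, i ≤ k → b i / (1 - r i) ≤ b k / (1 - r k))
    (π : Equiv.Perm (Fin n)) (u v : Fin n) (hv : (v : ℕ) = (u : ℕ) + 1)
    (hlt : π v < π u) :
    seriesCost b r (π * Equiv.swap u v) ≤ seriesCost b r π := by
  have huv : u < v := by rw [Fin.lt_def]; omega
  have hne : u ≠ v := ne_of_lt huv
  set s : Equiv.Perm (Fin n) := Equiv.swap u v with hs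
  set T : Fin n → ℝ := fun i => b (π i) * ∏ j ∈ Finset.Iio i, r (π j) with hT
  set T' : Fin n → ℝ := fun i => b ((π * s) i) * ∏ j ∈ Finset.Iio i, r ((π * s) j) with hT'
  have hsupp : ∀ j : Fin n, s j ≠ j → j = u ∨ j = v := by
    intro j hj
    by_contra hcon
    push_neg at hcon
    exact hj (Equiv.swap_apply_of_ne_of_ne hcon.1 hcon.2)
  have hEq : ∀ i ∈ (Finset.univ.erase v).erase u, T' i = T i := by
    intro i hi
    simp only [Finset.mem_erase] at hi
    obtain ⟨hiu, hiv, -⟩ := hi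
    have hfix : s i = i := Equiv.swap_apply_of_ne_of_ne hiu hiv
    simp only [hT, hT', Equiv.Perm.mul_apply, hfix]
    congr 1
    rcases lt_or_ge (i : ℕ) (v : ℕ) with hcase | hcase
    · -- i < v and i ≠ u, so i < u; swap fixes everything below i
      have hiu' : (i : ℕ) < (u : ℕ) := by
        have : (i : ℕ) ≠ (u : ℕ) := fun hc => hiu (Fin.ext hc)
        omega
      apply Finset.prod_congr rfl
      intro j hj
      have hj' : (j : ℕ) < (i : ℕ) := Fin.lt_def.mp (Finset.mem_Iio.mp hj)
      have : s j = j := by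
        apply Equiv.swap_apply_of_ne_of_ne
        · exact fun hc => by simp [hc] at hj'; omega
        · exact fun hc => by simp [hc] at hj'; omega
      rw [this]
    · -- v < i; the support of the swap lies inside Iio i
      have hvi : (v : ℕ) < (i : ℕ) := by
        have : (i : ℕ) ≠ (v : ℕ) := fun hc => hiv (Fin.ext hc)
        omega
      refine Equiv.Perm.prod_comp s _ (fun j => r (π j)) ?_
      intro j hj
      rcases hsupp j hj with rfl | rfl
      · exact Finset.mem_coe.mpr (Finset.mem_Iio.mpr (by rw [Fin.lt_def]; omega))
      · exact Finset.mem_coe.mpr (Finset.mem_Iio.mpr (by rw [Fin.lt_def]; omega))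
  have hmemv : v ∈ (Finset.univ : Finset (Fin n)) := Finset.mem_univ v
  have hmemu : u ∈ Finset.univ.erase v := Finset.mem_erase.mpr ⟨hne, Finset.mem_univ u⟩
  have e1 : seriesCost b r π = ((∑ i ∈ (Finset.univ.erase v).erase u, T i) + T u) + T v := by
    rw [seriesCost, ← Finset.sum_erase_add _ _ hmemv, ← Finset.sum_erase_add _ _ hmemu]
  have e2 : seriesCost b r (π * s) =
      ((∑ i ∈ (Finset.univ.erase v).erase u, T' i) + T' u) + T' v := by
    rw [seriesCost, ← Finset.sum_erase_add _ _ hmemv, ← Finset.sum_erase_add _ _ hmemu]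
  rw [e1, e2, Finset.sum_congr rfl hEq]
  -- compute the four exceptional terms
  set P : ℝ := ∏ j ∈ Finset.Iio u, r (π j) with hP
  have hunotmem : u ∉ Finset.Iio u := by simp
  have hsu : s u = v := Equiv.swap_apply_left u v
  have hsv : s v = u := Equiv.swap_apply_right u v
  have hfixlt : ∀ j : Fin n, (j : ℕ) < (u : ℕ) → s j = j := by
    intro j hj
    apply Equiv.swap_apply_of_ne_of_ne
    · exact fun hc => by simp [hc] at hj
    · exact fun hc => by simp [hc] at hj; omega
  have hP' : (∏ j ∈ Finset.Iio u, r (π (s j))) = P := by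
    apply Finset.prod_congr rfl
    intro j hj
    have hj' : (j : ℕ) < (u : ℕ) := Fin.lt_def.mp (Finset.mem_Iio.mp hj)
    simp [hfixlt j hj']
  have hTu : T u = b (π u) * P := rfl
  have hTv : T v = b (π v) * (r (π u) * P) := by
    simp only [hT, Iio_succ_eq hv, Finset.prod_insert hunotmem]
    rfl
  have hT'u : T' u = b (π v) * P := by
    simp only [hT', Equiv.Perm.mul_apply, hsu, hP']
  have hT'v : T' v = b (π u) * (r (π v) * P) := by
    simp only [hT', Iio_succ_eq hv, Finset.prod_insert hunotmem, Equiv.Perm.mul_apply, hsv, hsu,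
      hP']
  have hPnn : 0 ≤ P := Finset.prod_nonneg fun j _ => hr0 _
  have hq1 : 0 < 1 - r (π u) := by linarith [hr1 (π u)]
  have hq2 : 0 < 1 - r (π v) := by linarith [hr1 (π v)]
  have hratio := hmono (π v) (π u) (le_of_lt hlt)
  have hkey : b (π v) * (1 - r (π u)) ≤ b (π u) * (1 - r (π v)) :=
    (div_le_div_iff₀ hq2 hq1).mp hratio
  have hmul := mul_le_mul_of_nonneg_right hkey hPnn
  rw [hTu, hTv, hT'u, hT'v]
  nlinarith [hmul]

lemma mu_lt (π : Equiv.Perm (Fin n)) (u v : Fin n) (hv : (v : ℕ) = (u : ℕ) + 1)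
    (hlt : π v < π u) : mu (π * Equiv.swap u v) < mu π := by
  have hne : u ≠ v := by intro h; rw [h] at hv; omega
  set s : Equiv.Perm (Fin n) := Equiv.swap u v with hs
  set W : Fin n → ℕ := fun i => (n + 1) ^ (n - (i : ℕ)) with hW
  set T : Fin n → ℕ := fun i => (π i : ℕ) * W i with hT
  set T' : Fin n → ℕ := fun i => ((π * s) i : ℕ) * W i with hT'
  have hmemv : v ∈ (Finset.univ : Finset (Fin n)) := Finset.mem_univ v
  have hmemu : u ∈ Finset.univ.erase v := Finset.mem_erase.mpr ⟨hne, Finset.mem_univ u⟩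
  have e1 : mu π = ((∑ i ∈ (Finset.univ.erase v).erase u, T i) + T u) + T v := by
    rw [mu, ← Finset.sum_erase_add _ _ hmemv, ← Finset.sum_erase_add _ _ hmemu]
  have e2 : mu (π * s) = ((∑ i ∈ (Finset.univ.erase v).erase u, T' i) + T' u) + T' v := by
    rw [mu, ← Finset.sum_erase_add _ _ hmemv, ← Finset.sum_erase_add _ _ hmemu]
  have hEq : ∀ i ∈ (Finset.univ.erase v).erase u, T' i = T i := by
    intro i hi
    simp only [Finset.mem_erase] at hi
    obtain ⟨hiu, hiv, -⟩ := hi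
    have hfix : s i = i := Equiv.swap_apply_of_ne_of_ne hiu hiv
    simp [hT, hT', Equiv.Perm.mul_apply, hfix]
  have hsu : s u = v := Equiv.swap_apply_left u v
  have hsv : s v = u := Equiv.swap_apply_right u v
  have hT'u : T' u = (π v : ℕ) * W u := by simp [hT', Equiv.Perm.mul_apply, hsu]
  have hT'v : T' v = (π u : ℕ) * W v := by simp [hT', Equiv.Perm.mul_apply, hsv]
  have hTu : T u = (π u : ℕ) * W u := rfl
  have hTv : T v = (π v : ℕ) * W v := rfl
  have hun : (u : ℕ) + 1 < n := by have := v.isLt; omega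
  have hWuv : W u = (n + 1) * W v := by
    have : n - (u : ℕ) = (n - (v : ℕ)) + 1 := by omega
    simp only [hW, this, pow_succ]
    ring
  have hWvpos : 0 < W v := Nat.pow_pos (by omega)
  have hBA : (π v : ℕ) < (π u : ℕ) := hlt
  have key : T' u + T' v < T u + T v := by
    rw [hT'u, hT'v, hTu, hTv, hWuv]
    have h1 : ((π v : ℕ) + 1) * n ≤ (π u : ℕ) * n := Nat.mul_le_mul_right n hBA
    nlinarith [hWvpos, hBA, hun, h1]
  rw [e1, e2, add_assoc, add_assoc]
  exact add_lt_add_of_le_of_lt (le_of_eq (Finset.sum_congr rfl hEq)) key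

lemma id_min (b r : Fin n → ℝ) (hb : ∀ i, 0 ≤ b i) (hr0 : ∀ i, 0 ≤ r i)
    (hr1 : ∀ i, r i < 1)
    (hmono : ∀ i k : Fin n, i ≤ k → b i / (1 - r i) ≤ b k / (1 - r k)) :
    ∀ π : Equiv.Perm (Fin n), seriesCost b r 1 ≤ seriesCost b r π := by
  have key : ∀ N : ℕ, ∀ π : Equiv.Perm (Fin n), mu π = N →
      seriesCost b r 1 ≤ seriesCost b r π := by
    intro N
    induction N using Nat.strong_induction_on with
    | _ N ih =>
      intro π hN
      by_cases hπ : π = 1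
      · rw [hπ]
      · have hadj : ¬ ∀ u v : Fin n, (v : ℕ) = (u : ℕ) + 1 → π u ≤ π v :=
          fun h => hπ (perm_eq_one π h)
        push_neg at hadj
        obtain ⟨u, v, hv, hlt⟩ := hadj
        have h1 := swap_step b r hb hr0 hr1 hmono π u v hv hlt
        have h2 := mu_lt π u v hv hlt
        exact le_trans (ih _ (hN ▸ h2) _ rfl) h1
  intro π
  exact key (mu π) π rfl

end SeriesCostAux

/-- If the ratios `a (σ i) / q (σ i)` (with `q i = 1 - p i`) are nondecreasing along the
sequence `σ`, then `σ` minimizes the expected inspection cost of the series system. -/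
theorem series_ratio_sequence_optimal {n : ℕ} (a p q : Fin n → ℝ)
    (ha : ∀ i, 0 ≤ a i) (hp : ∀ i, 0 ≤ p i) (hp1 : ∀ i, p i < 1)
    (hq : ∀ i, q i = 1 - p i)
    (σ : Equiv.Perm (Fin n))
    (hσ : ∀ i k : Fin n, i ≤ k → a (σ i) / q (σ i) ≤ a (σ k) / q (σ k)) :
    ∀ τ : Equiv.Perm (Fin n), seriesCost a p σ ≤ seriesCost a p τ := by
  intro τ
  set b : Fin n → ℝ := fun i => a (σ i) with hb
  set r : Fin n → ℝ := fun i => p (σ i) with hr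
  have hcomp : ∀ π : Equiv.Perm (Fin n), seriesCost a p (σ * π) = seriesCost b r π := by
    intro π
    simp [seriesCost, Equiv.Perm.mul_apply, hb, hr]
  have h1 : seriesCost a p σ = seriesCost b r 1 := by
    rw [← hcomp 1, mul_one]
  have h2 : seriesCost a p τ = seriesCost b r (σ⁻¹ * τ) := by
    rw [← hcomp, mul_inv_cancel_left]
  rw [h1, h2]
  apply SeriesCostAux.id_min
  · intro i; exact ha _
  · intro i; exact hp _
  · intro i; exact hp1 _
  · intro i k hik
    have := hσ i k hik
    rwa [hq, hq] at this
end

section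
/- Let n inspection stations have costs a : Fin n → ℝ and pass probabilities p : Fin n → ℝ with 0 ≤ p i ≤ 1, and set q i = 1 - p i. For a permutation ρ of Fin n define E(ρ) = Σ_{i : Fin n} a(ρ(i)) · ∏_{j < i} p(ρ(j)). If ρ' is obtained from ρ by composing with the transposition of two adjacent positions k and k+1 (k+1 < n), then E(ρ') - E(ρ) = (∏_{j < k} p(ρ(j))) · (a(ρ(k+1))·q(ρ(k)) - a(ρ(k))·q(ρ(k+1))). In particular, if a(ρ(k))/q(ρ(k)) ≤ a(ρ(k+1))/q(ρ(k+1)) with q(ρ(k)), q(ρ(k+1)) > 0 and a ≥ 0, then E(ρ) ≤ E(ρ'). -/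
/-- Interchanging two adjacent stations at positions `k` and `k+1` of the sequence `ρ`
changes the expected series inspection cost by
`(∏_{j<k} p (ρ j)) * (a (ρ (k+1)) * q (ρ k) - a (ρ k) * q (ρ (k+1)))`; in particular,
if `a (ρ k) / q (ρ k) ≤ a (ρ (k+1)) / q (ρ (k+1))` (with positive `q`'s and nonnegative
costs), then `ρ` is no worse than the interchanged sequence. -/
theorem series_adjacent_interchange {n : ℕ} (a p q : Fin n → ℝ)
    (hp : ∀ i, 0 ≤ p i) (hp1 : ∀ i, p i ≤ 1) (hq : ∀ i, q i = 1 - p i)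
    (k : ℕ) (hk : k + 1 < n) (ρ : Equiv.Perm (Fin n))
    (ρ' : Equiv.Perm (Fin n))
    (hρ' : ρ' = ρ * Equiv.swap (⟨k, Nat.lt_of_succ_lt hk⟩ : Fin n) (⟨k + 1, hk⟩ : Fin n)) :
    seriesCost a p ρ' - seriesCost a p ρ =
      (∏ j ∈ Finset.Iio (⟨k, Nat.lt_of_succ_lt hk⟩ : Fin n), p (ρ j)) *
        (a (ρ ⟨k + 1, hk⟩) * q (ρ ⟨k, Nat.lt_of_succ_lt hk⟩) -
          a (ρ ⟨k, Nat.lt_of_succ_lt hk⟩) * q (ρ ⟨k + 1, hk⟩)) ∧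
    ((∀ i, 0 ≤ a i) → 0 < q (ρ ⟨k, Nat.lt_of_succ_lt hk⟩) →
      0 < q (ρ ⟨k + 1, hk⟩) →
      a (ρ ⟨k, Nat.lt_of_succ_lt hk⟩) / q (ρ ⟨k, Nat.lt_of_succ_lt hk⟩) ≤
        a (ρ ⟨k + 1, hk⟩) / q (ρ ⟨k + 1, hk⟩) →
      seriesCost a p ρ ≤ seriesCost a p ρ') := by
  subst hρ'
  set K : Fin n := ⟨k, Nat.lt_of_succ_lt hk⟩ with hK
  set K1 : Fin n := ⟨k + 1, hk⟩ with hK1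
  have hKK1 : K ≠ K1 := by simp [hK, hK1, Fin.ext_iff]
  set σ := Equiv.swap K K1 with hσ
  have hσK : σ K = K1 := Equiv.swap_apply_left K K1
  have hσK1 : σ K1 = K := Equiv.swap_apply_right K K1
  -- product over Iio K is unchanged
  have hPK : ∏ j ∈ Finset.Iio K, p (ρ (σ j)) = ∏ j ∈ Finset.Iio K, p (ρ j) := by
    apply Finset.prod_congr rfl
    intro j hj
    rw [Finset.mem_Iio] at hj
    have hjK : j ≠ K := ne_of_lt hj
    have hjK1 : j ≠ K1 := by
      intro e; subst e
      exact absurd hj (by simp [hK, hK1, Fin.lt_def])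
    rw [hσ, Equiv.swap_apply_of_ne_of_ne hjK hjK1]
  have hIio : Finset.Iio K1 = insert K (Finset.Iio K) := by
    ext j
    simp only [Finset.mem_Iio, Finset.mem_insert, Fin.lt_def, hK, hK1, Fin.ext_iff]
    omega
  have hKnot : K ∉ Finset.Iio K := by simp
  set P := ∏ j ∈ Finset.Iio K, p (ρ j) with hP
  -- terms away from K, K1 agree
  have hterm : ∀ i : Fin n, i ≠ K → i ≠ K1 →
      a ((ρ * σ) i) * ∏ j ∈ Finset.Iio i, p ((ρ * σ) j)
        = a (ρ i) * ∏ j ∈ Finset.Iio i, p (ρ j) := by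
    intro i hiK hiK1
    simp only [Equiv.Perm.mul_apply]
    rw [hσ, Equiv.swap_apply_of_ne_of_ne hiK hiK1]
    congr 1
    rcases lt_or_ge i K1 with h | h
    · apply Finset.prod_congr rfl
      intro j hj
      rw [Finset.mem_Iio] at hj
      have hi' : (i : ℕ) < k + 1 := Fin.lt_def.mp h
      have hj' : (j : ℕ) < (i : ℕ) := Fin.lt_def.mp hj
      have hjK : j ≠ K := Fin.ne_of_val_ne (by simp [hK]; omega)
      have hjK1 : j ≠ K1 := Fin.ne_of_val_ne (by simp [hK1]; omega)
      rw [Equiv.swap_apply_of_ne_of_ne hjK hjK1]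
    · have h' : K1 < i := lt_of_le_of_ne h (Ne.symm hiK1)
      refine Equiv.Perm.prod_comp _ _ (fun x => p (ρ x)) ?_
      intro x hx
      have : x = K ∨ x = K1 := by
        by_contra hc
        push_neg at hc
        exact hx (Equiv.swap_apply_of_ne_of_ne hc.1 hc.2)
      rcases this with rfl | rfl
      · exact Finset.mem_Iio.mpr (lt_trans (by simp [hK, hK1, Fin.lt_def]) h')
      · exact Finset.mem_Iio.mpr h'
  -- main difference formula
  have hmain : seriesCost a p (ρ * σ) - seriesCost a p ρ =
      P * (a (ρ K1) * q (ρ K) - a (ρ K) * q (ρ K1)) := by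
    unfold seriesCost
    rw [← Finset.sum_sub_distrib]
    rw [← Finset.sum_subset (Finset.subset_univ ({K, K1} : Finset (Fin n)))
      (by
        intro i _ hi
        simp only [Finset.mem_insert, Finset.mem_singleton] at hi
        push_neg at hi
        rw [hterm i hi.1 hi.2, sub_self])]
    rw [Finset.sum_pair hKK1]
    have e1 : a ((ρ * σ) K) * ∏ j ∈ Finset.Iio K, p ((ρ * σ) j) = a (ρ K1) * P := by
      simp only [Equiv.Perm.mul_apply, hσK]
      rw [hPK]
    have e2 : a ((ρ * σ) K1) * ∏ j ∈ Finset.Iio K1, p ((ρ * σ) j)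
        = a (ρ K) * (p (ρ K1) * P) := by
      simp only [Equiv.Perm.mul_apply, hσK1]
      rw [hIio, Finset.prod_insert hKnot, hσK, hPK]
    have e3 : a (ρ K1) * ∏ j ∈ Finset.Iio K1, p (ρ j) = a (ρ K1) * (p (ρ K) * P) := by
      rw [hIio, Finset.prod_insert hKnot]
    rw [e1, e2, e3, hq (ρ K), hq (ρ K1)]
    ring
  refine ⟨hmain, ?_⟩
  intro ha hqK hqK1 hratio
  have hPnn : 0 ≤ P := Finset.prod_nonneg fun j _ => hp _
  have hcross : a (ρ K) * q (ρ K1) ≤ a (ρ K1) * q (ρ K) :=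
    (div_le_div_iff₀ hqK hqK1).mp hratio
  nlinarith [mul_nonneg hPnn (sub_nonneg.mpr hcross)]
end

section
/- Let n inspection stations have nonnegative costs a : Fin n → ℝ and probabilities p : Fin n → ℝ with 0 < p i ≤ 1 for all i, and set q i = 1 - p i. For a permutation ρ of Fin n define the expected inspection cost of the parallel system under the sequence ρ as E(ρ) = Σ_{i : Fin n} a(ρ(i)) · ∏_{j < i} q(ρ(j)). If σ is a permutation such that the ratios a(σ(i))/p(σ(i)) are nondecreasing in i, then for every permutation τ of Fin n, E(σ) ≤ E(τ). -/
noncomputable def parallelCost {n : ℕ} (a q : Fin n → ℝ) (ρ : Equiv.Perm (Fin n)) : ℝ :=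
  ∑ i : Fin n, a (ρ i) * ∏ j ∈ Finset.Iio i, q (ρ j)

section
variable {n : ℕ}

lemma aux_swap_lt {ii jj : Fin n} (hij : (ii:ℕ)+1 = (jj:ℕ)) {i j : Fin n}
    (hlt : i < j) (hne : ¬(i = ii ∧ j = jj)) :
    Equiv.swap ii jj i < Equiv.swap ii jj j := by
  have hiijj : ii < jj := Fin.lt_def.mpr (by omega)
  rcases eq_or_ne i ii with rfl | hi1
  · rcases eq_or_ne j jj with rfl | hj2
    · exact absurd ⟨rfl, rfl⟩ hne
    · have hj1 : j ≠ i := ne_of_gt hlt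
      rw [Equiv.swap_apply_left, Equiv.swap_apply_of_ne_of_ne hj1 hj2]
      have h1 : (i:ℕ) < (j:ℕ) := hlt
      have h2 : (j:ℕ) ≠ (jj:ℕ) := fun h => hj2 (Fin.ext h)
      exact Fin.lt_def.mpr (by omega)
  · rcases eq_or_ne i jj with rfl | hi2
    · have hj1 : j ≠ ii := ne_of_gt (lt_trans hiijj hlt)
      have hj2 : j ≠ i := ne_of_gt hlt
      rw [Equiv.swap_apply_right, Equiv.swap_apply_of_ne_of_ne hj1 hj2]
      exact lt_trans hiijj hlt
    · rcases eq_or_ne j ii with rfl | hj1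
      · rw [Equiv.swap_apply_left, Equiv.swap_apply_of_ne_of_ne hi1 hi2]
        exact lt_trans hlt hiijj
      · rcases eq_or_ne j jj with rfl | hj2
        · rw [Equiv.swap_apply_right, Equiv.swap_apply_of_ne_of_ne hi1 hi2]
          have h1 : (i:ℕ) < (j:ℕ) := hlt
          have h2 : (i:ℕ) ≠ (ii:ℕ) := fun h => hi1 (Fin.ext h)
          exact Fin.lt_def.mpr (by omega)
        · rw [Equiv.swap_apply_of_ne_of_ne hi1 hi2,
            Equiv.swap_apply_of_ne_of_ne hj1 hj2]
          exact hlt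


lemma prod_swap_invariant (q : Fin n → ℝ) (τ : Equiv.Perm (Fin n)) (s : Equiv.Perm (Fin n))
    (hs : ∀ x, s (s x) = x) (k : Fin n) (hmap : ∀ j, j < k → s j < k) :
    ∏ j ∈ Finset.Iio k, q (τ (s j)) = ∏ j ∈ Finset.Iio k, q (τ j) := by
  have himg : (Finset.Iio k).image s = Finset.Iio k := by
    ext x
    simp only [Finset.mem_image, Finset.mem_Iio]
    constructor
    · rintro ⟨y, hy, rfl⟩; exact hmap y hy
    · intro hx; exact ⟨s x, hmap x hx, hs x⟩
  calc ∏ j ∈ Finset.Iio k, q (τ (s j))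
      = ∏ x ∈ (Finset.Iio k).image s, q (τ x) := by
        rw [Finset.prod_image (fun x _ y _ h => s.injective h)]
    _ = ∏ j ∈ Finset.Iio k, q (τ j) := by rw [himg]

lemma swap_cost_le (a p q : Fin n → ℝ)
    (ha : ∀ i, 0 ≤ a i) (hp : ∀ i, 0 < p i) (hp1 : ∀ i, p i ≤ 1) (hq : ∀ i, q i = 1 - p i)
    (τ : Equiv.Perm (Fin n)) (ii jj : Fin n) (hij : (ii:ℕ)+1 = (jj:ℕ))
    (hle : a (τ jj) * p (τ ii) ≤ a (τ ii) * p (τ jj)) :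
    parallelCost a q (τ * Equiv.swap ii jj) ≤ parallelCost a q τ := by
  set s := Equiv.swap ii jj with hsdef
  have hs : ∀ x, s (s x) = x := fun x => Equiv.swap_apply_self ii jj x
  have hne : ii ≠ jj := by intro h; rw [h] at hij; omega
  have hq0 : ∀ i, 0 ≤ q i := fun i => by rw [hq i]; linarith [hp1 i]
  set τ' := τ * s with hτ'
  have hτ'app : ∀ x, τ' x = τ (s x) := fun x => rfl
  -- the difference function
  set f := fun k : Fin n => a (τ k) * ∏ j ∈ Finset.Iio k, q (τ j) with hf
  set g := fun k : Fin n => a (τ' k) * ∏ j ∈ Finset.Iio k, q (τ' j) with hg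
  have hzero : ∀ k : Fin n, k ≠ ii → k ≠ jj → f k - g k = 0 := by
    intro k hk1 hk2
    have hsk : s k = k := Equiv.swap_apply_of_ne_of_ne hk1 hk2
    have hmap : ∀ j, j < k → s j < k := by
      intro j hj
      rcases eq_or_ne j ii with rfl | h1
      · -- jj < k since ii < k and k ≠ jj
        have : (j:ℕ) < (k:ℕ) := hj
        have hk2' : (k:ℕ) ≠ (jj:ℕ) := fun h => hk2 (Fin.ext h)
        rw [Equiv.swap_apply_left]
        exact Fin.lt_def.mpr (by omega)
      · rcases eq_or_ne j jj with rfl | h2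
        · rw [Equiv.swap_apply_right]
          have h1' : (j:ℕ) < (k:ℕ) := hj
          exact Fin.lt_def.mpr (by omega)
        · rwa [Equiv.swap_apply_of_ne_of_ne h1 h2]
    have hprod : ∏ j ∈ Finset.Iio k, q (τ' j) = ∏ j ∈ Finset.Iio k, q (τ j) :=
      prod_swap_invariant q τ s hs k hmap
    have hgk : g k = f k := by
      show a (τ' k) * ∏ j ∈ Finset.Iio k, q (τ' j) = a (τ k) * ∏ j ∈ Finset.Iio k, q (τ j)
      rw [hprod, hτ'app, hsk]
    rw [hgk]; ring
  have hIio : Finset.Iio jj = insert ii (Finset.Iio ii) := by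
    ext x
    simp only [Finset.mem_Iio, Finset.mem_insert, Fin.lt_def]
    constructor
    · intro h
      rcases Nat.lt_or_ge (x:ℕ) (ii:ℕ) with h' | h'
      · exact Or.inr h'
      · exact Or.inl (Fin.ext (by omega))
    · rintro (rfl | h) <;> omega
  have hPii' : ∏ j ∈ Finset.Iio ii, q (τ' j) = ∏ j ∈ Finset.Iio ii, q (τ j) := by
    apply Finset.prod_congr rfl
    intro x hx
    simp only [Finset.mem_Iio] at hx
    have h1 : x ≠ ii := ne_of_lt hx
    have h2 : x ≠ jj := by
      intro h; rw [h] at hx; have := Fin.lt_def.mp hx; omega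
    rw [hτ'app]
    rw [show s x = x from Equiv.swap_apply_of_ne_of_ne h1 h2]
  set P := ∏ j ∈ Finset.Iio ii, q (τ j) with hP
  have hP0 : 0 ≤ P := Finset.prod_nonneg (fun j _ => hq0 _)
  have key : parallelCost a q τ - parallelCost a q τ' =
      P * (a (τ ii) * p (τ jj) - a (τ jj) * p (τ ii)) := by
    have hsum : parallelCost a q τ - parallelCost a q τ' = ∑ k : Fin n, (f k - g k) := by
      rw [Finset.sum_sub_distrib]; rfl
    rw [hsum]
    have hsub : ∑ k : Fin n, (f k - g k) = ∑ k ∈ ({ii, jj} : Finset (Fin n)), (f k - g k) := by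
      symm
      apply Finset.sum_subset (Finset.subset_univ _)
      intro x _ hx
      simp only [Finset.mem_insert, Finset.mem_singleton, not_or] at hx
      exact hzero x hx.1 hx.2
    rw [hsub, Finset.sum_pair hne]
    have hii_notmem : ii ∉ Finset.Iio ii := by simp
    have hsii : s ii = jj := Equiv.swap_apply_left ii jj
    have hsjj : s jj = ii := Equiv.swap_apply_right ii jj
    have e1 : f ii = a (τ ii) * P := rfl
    have e2 : g ii = a (τ jj) * P := by
      show a (τ' ii) * ∏ j ∈ Finset.Iio ii, q (τ' j) = a (τ jj) * P
      rw [hPii', hτ'app, hsii]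
    have e3 : f jj = a (τ jj) * (q (τ ii) * P) := by
      simp only [hf, hIio, Finset.prod_insert hii_notmem]
      rfl
    have e4 : g jj = a (τ ii) * (q (τ jj) * P) := by
      show a (τ' jj) * ∏ j ∈ Finset.Iio jj, q (τ' j) = a (τ ii) * (q (τ jj) * P)
      rw [hIio, Finset.prod_insert hii_notmem, hPii', hτ'app, hsjj, hτ'app ii, hsii]
    rw [e1, e2, e3, e4, hq (τ ii), hq (τ jj)]
    ring
  have : 0 ≤ parallelCost a q τ - parallelCost a q τ' := by
    rw [key]
    apply mul_nonneg hP0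
    linarith
  linarith

def invs (π : Equiv.Perm (Fin n)) : Finset (Fin n × Fin n) :=
  Finset.univ.filter (fun x => x.1 < x.2 ∧ π x.2 < π x.1)

lemma invs_swap_card (π : Equiv.Perm (Fin n)) (ii jj : Fin n) (hij : (ii:ℕ)+1 = (jj:ℕ))
    (hdes : π jj < π ii) :
    (invs (π * Equiv.swap ii jj)).card < (invs π).card := by
  set s := Equiv.swap ii jj with hsdef
  have hs : ∀ x, s (s x) = x := fun x => Equiv.swap_apply_self ii jj x
  have hiijj : ii < jj := Fin.lt_def.mpr (by omega)
  have hmem : (ii, jj) ∈ invs π := by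
    simp [invs, hiijj, hdes]
  have hnotmem : (ii, jj) ∉ invs (π * s) := by
    simp only [invs, Finset.mem_filter, Finset.mem_univ, true_and, not_and]
    intro _
    simp only [Equiv.Perm.mul_apply, Equiv.swap_apply_left, Equiv.swap_apply_right, hsdef]
    exact not_lt.mpr (le_of_lt hdes)
  have hcard : (invs (π * s)).card = ((invs π).erase (ii, jj)).card := by
    apply Finset.card_bij' (fun x _ => (s x.1, s x.2)) (fun x _ => (s x.1, s x.2))
    · -- forward membership
      intro x hx
      simp only [invs, Finset.mem_filter, Finset.mem_univ, true_and] at hx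
      have hxne : ¬(x.1 = ii ∧ x.2 = jj) := by
        rintro ⟨h1, h2⟩
        apply hnotmem
        simp only [invs, Finset.mem_filter, Finset.mem_univ, true_and]
        exact ⟨by rw [← h1, ← h2] at hiijj ⊢; exact hx.1, by rw [← h1, ← h2] at hdes ⊢; exact hx.2⟩
      have hlt : s x.1 < s x.2 := aux_swap_lt hij hx.1 hxne
      refine Finset.mem_erase.mpr ⟨?_, ?_⟩
      · intro h
        have h1 : s x.1 = ii := congrArg Prod.fst h
        have h2 : s x.2 = jj := congrArg Prod.snd h
        have : x.1 = jj := by rw [← hs x.1, h1]; exact Equiv.swap_apply_left ii jj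
        have : x.2 = ii := by rw [← hs x.2, h2]; exact Equiv.swap_apply_right ii jj
        have := hx.1
        rw [‹x.1 = jj›, ‹x.2 = ii›] at this
        exact absurd this (not_lt.mpr (le_of_lt hiijj))
      · simp only [invs, Finset.mem_filter, Finset.mem_univ, true_and]
        refine ⟨hlt, ?_⟩
        have := hx.2
        simpa only [Equiv.Perm.mul_apply] using this
    · -- backward membership
      intro x hx
      rw [Finset.mem_erase] at hx
      obtain ⟨hxne', hx⟩ := hx
      simp only [invs, Finset.mem_filter, Finset.mem_univ, true_and] at hx
      have hxne : ¬(x.1 = ii ∧ x.2 = jj) := by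
        rintro ⟨h1, h2⟩
        exact hxne' (Prod.ext h1 h2)
      have hlt : s x.1 < s x.2 := aux_swap_lt hij hx.1 hxne
      simp only [invs, Finset.mem_filter, Finset.mem_univ, true_and]
      refine ⟨hlt, ?_⟩
      simp only [Equiv.Perm.mul_apply, hs]
      exact hx.2
    · intro x _; exact Prod.ext (hs x.1) (hs x.2)
    · intro x _; exact Prod.ext (hs x.1) (hs x.2)
  rw [hcard, Finset.card_erase_of_mem hmem]
  exact Nat.sub_lt (Finset.card_pos.mpr ⟨_, hmem⟩) one_pos

lemma fin_le_apply_of_strictMono (f : Fin n → Fin n) (h : StrictMono f) : ∀ i : Fin n, (i:ℕ) ≤ (f i : ℕ) := by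
  have key : ∀ m, ∀ i : Fin n, (i:ℕ) = m → m ≤ (f i : ℕ) := by
    intro m
    induction m with
    | zero => intro i _; omega
    | succ k ih =>
      intro i hi
      have hk : k < n := by omega
      have h1 := ih ⟨k, hk⟩ rfl
      have h2 : f ⟨k, hk⟩ < f i := h (Fin.lt_def.mpr (by simp; omega))
      have := Fin.lt_def.mp h2
      omega
  intro i; exact key (i:ℕ) i rfl

lemma perm_eq_one_of_strictMono (π : Equiv.Perm (Fin n)) (h : StrictMono ⇑π) : π = 1 := by
  have hinv : StrictMono ⇑π⁻¹ := by
    intro x y hxy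
    have : π (π⁻¹ x) < π (π⁻¹ y) := by
      rw [Equiv.Perm.inv_def, Equiv.apply_symm_apply, Equiv.apply_symm_apply]; exact hxy
    exact h.lt_iff_lt.mp this
  ext i
  have h1 := fin_le_apply_of_strictMono _ h i
  have h2 := fin_le_apply_of_strictMono _ hinv (π i)
  rw [Equiv.Perm.inv_def, Equiv.symm_apply_apply] at h2
  simp only [Equiv.Perm.one_apply]
  omega

lemma strictMono_of_adj (π : Equiv.Perm (Fin n))
    (h : ∀ i : ℕ, ∀ hi : i+1 < n, π ⟨i, by omega⟩ < π ⟨i+1, hi⟩) : StrictMono ⇑π := by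
  have key : ∀ d : ℕ, ∀ i j : Fin n, (j:ℕ) = (i:ℕ) + d + 1 → π i < π j := by
    intro d
    induction d with
    | zero =>
      intro i j hj
      have hi : (i:ℕ) + 1 < n := by omega
      have := h (i:ℕ) hi
      have hi' : (⟨(i:ℕ), by omega⟩ : Fin n) = i := Fin.ext rfl
      have hj' : (⟨(i:ℕ)+1, hi⟩ : Fin n) = j := Fin.ext (show (i:ℕ)+1 = (j:ℕ) by omega)
      rwa [hi', hj'] at this
    | succ d ih =>
      intro i j hj
      have hm : (i:ℕ) + d + 1 < n := by omega
      have h1 : π i < π ⟨(i:ℕ) + d + 1, hm⟩ := ih i _ rfl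
      have h2 : π ⟨(i:ℕ) + d + 1, hm⟩ < π j := by
        have := h ((i:ℕ) + d + 1) (by omega)
        have hj' : (⟨(i:ℕ)+d+1+1, by omega⟩ : Fin n) = j := Fin.ext (show (i:ℕ)+d+1+1 = (j:ℕ) by omega)
        rwa [hj'] at this
      exact lt_trans h1 h2
  intro i j hij
  have : (j:ℕ) = (i:ℕ) + ((j:ℕ) - (i:ℕ) - 1) + 1 := by
    have := Fin.lt_def.mp hij; omega
  exact key _ i j this


end

/-- If the ratios `a (σ i) / p (σ i)` are nondecreasing along the sequence `σ`, then `σ`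
minimizes the expected inspection cost of the parallel system. -/
theorem parallel_ratio_sequence_optimal {n : ℕ} (a p q : Fin n → ℝ)
    (ha : ∀ i, 0 ≤ a i) (hp : ∀ i, 0 < p i) (hp1 : ∀ i, p i ≤ 1)
    (hq : ∀ i, q i = 1 - p i)
    (σ : Equiv.Perm (Fin n))
    (hσ : ∀ i k : Fin n, i ≤ k → a (σ i) / p (σ i) ≤ a (σ k) / p (σ k)) :
    ∀ τ : Equiv.Perm (Fin n), parallelCost a q σ ≤ parallelCost a q τ := by
  have key : ∀ N : ℕ, ∀ τ : Equiv.Perm (Fin n), (invs (σ⁻¹ * τ)).card ≤ N →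
      parallelCost a q σ ≤ parallelCost a q τ := by
    intro N
    induction N with
    | zero =>
      intro τ hcard
      have hempty : invs (σ⁻¹ * τ) = ∅ := Finset.card_eq_zero.mp (Nat.le_zero.mp hcard)
      have hmono : StrictMono ⇑(σ⁻¹ * τ) := by
        intro i j hij
        by_contra hcon
        have hne : (σ⁻¹ * τ) i ≠ (σ⁻¹ * τ) j :=
          fun h => (ne_of_lt hij) ((σ⁻¹ * τ).injective h)
        have hlt : (σ⁻¹ * τ) j < (σ⁻¹ * τ) i := lt_of_le_of_ne (not_lt.mp hcon) hne.symm
        have : (i, j) ∈ invs (σ⁻¹ * τ) := by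
          simp only [invs, Finset.mem_filter, Finset.mem_univ, true_and]
          exact ⟨hij, hlt⟩
        rw [hempty] at this
        exact absurd this (Finset.notMem_empty _)
      have h1 : σ⁻¹ * τ = 1 := perm_eq_one_of_strictMono _ hmono
      have hτσ : σ = τ := inv_mul_eq_one.mp h1
      rw [hτσ]
    | succ N ih =>
      intro τ hcard
      by_cases hN : (invs (σ⁻¹ * τ)).card ≤ N
      · exact ih τ hN
      have hpos : 0 < (invs (σ⁻¹ * τ)).card := by omega
      have hdesc : ∃ i : ℕ, ∃ hi : i+1 < n,
          (σ⁻¹ * τ) ⟨i+1, hi⟩ < (σ⁻¹ * τ) ⟨i, by omega⟩ := by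
        by_contra hcon
        push_neg at hcon
        have hadj : ∀ i : ℕ, ∀ hi : i+1 < n,
            (σ⁻¹ * τ) ⟨i, by omega⟩ < (σ⁻¹ * τ) ⟨i+1, hi⟩ := by
          intro i hi
          have hne : (σ⁻¹ * τ) ⟨i, by omega⟩ ≠ (σ⁻¹ * τ) ⟨i+1, hi⟩ := by
            intro h
            have := (σ⁻¹ * τ).injective h
            have := congrArg Fin.val this
            simp at this
          exact lt_of_le_of_ne (hcon i hi) hne
        have h1 : σ⁻¹ * τ = 1 :=
          perm_eq_one_of_strictMono _ (strictMono_of_adj _ hadj)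
        rw [h1] at hpos
        have hempty : invs (1 : Equiv.Perm (Fin n)) = ∅ := by
          ext x
          simp only [invs, Finset.mem_filter, Finset.mem_univ, true_and,
            Equiv.Perm.one_apply, Finset.notMem_empty, iff_false, not_and]
          exact fun h => not_lt.mpr (le_of_lt (Finset.mem_filter.mp h).2.1) (Finset.mem_filter.mp h).2.2
        rw [hempty] at hpos
        simp at hpos
      obtain ⟨i, hi, hdes⟩ := hdesc
      set ii : Fin n := ⟨i, by omega⟩ with hii
      set jj : Fin n := ⟨i+1, hi⟩ with hjj
      have hij : (ii:ℕ)+1 = (jj:ℕ) := rfl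
      -- ratio inequality
      have hratle : (σ⁻¹ (τ jj)) ≤ (σ⁻¹ (τ ii)) := le_of_lt hdes
      have hdiv := hσ _ _ hratle
      rw [Equiv.Perm.inv_def, Equiv.apply_symm_apply, Equiv.apply_symm_apply] at hdiv
      have hle : a (τ jj) * p (τ ii) ≤ a (τ ii) * p (τ jj) :=
        (div_le_div_iff₀ (hp (τ jj)) (hp (τ ii))).mp hdiv
      have hswap := swap_cost_le a p q ha hp hp1 hq τ ii jj hij hle
      have hcard' : (invs (σ⁻¹ * (τ * Equiv.swap ii jj))).card ≤ N := by
        have h2 : σ⁻¹ * (τ * Equiv.swap ii jj) = (σ⁻¹ * τ) * Equiv.swap ii jj := by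
          rw [mul_assoc]
        rw [h2]
        have := invs_swap_card (σ⁻¹ * τ) ii jj hij hdes
        omega
      exact le_trans (ih _ hcard') hswap
  intro τ
  exact key _ τ le_rfl
end

section
/- Let n inspection stations have nonnegative inspection costs c : Fin n → ℝ, nonnegative inspection times t : Fin n → ℝ, and pass probabilities p : Fin n → ℝ with 0 ≤ p i < 1, q i = 1 - p i. Fix weights w₁, w₂ ≥ 0. For a permutation ρ of Fin n define the weighted fitness f(ρ) = Σ_{i : Fin n} (w₁·c(ρ(i)) + w₂·t(ρ(i))) · ∏_{j < i} p(ρ(j)). If σ is a permutation such that the ratios (w₁·c(σ(i)) + w₂·t(σ(i)))/q(σ(i)) are nondecreasing in i, then for every permutation τ of Fin n, f(σ) ≤ f(τ). -/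
/-- Weighted fitness (weighted combination of expected cost and expected time) of a series
inspection system under inspection sequence `ρ`. -/
noncomputable def weightedFitness {n : ℕ} (w₁ w₂ : ℝ) (c t p : Fin n → ℝ)
    (ρ : Equiv.Perm (Fin n)) : ℝ :=
  ∑ i : Fin n, (w₁ * c (ρ i) + w₂ * t (ρ i)) * ∏ j ∈ Finset.Iio i, p (ρ j)

open Finset

noncomputable def F {n : ℕ} (b r : Fin n → ℝ) (π : Equiv.Perm (Fin n)) : ℝ :=
  ∑ i : Fin n, b (π i) * ∏ j ∈ Finset.Iio i, r (π j)

lemma swap_le {n : ℕ} (b r : Fin n → ℝ) (hb : ∀ i, 0 ≤ b i) (hr : ∀ i, 0 ≤ r i)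
    (hr1 : ∀ i, r i < 1)
    (π : Equiv.Perm (Fin n)) (k k₁ : Fin n) (hk : (k : ℕ) + 1 = (k₁ : ℕ))
    (hratio : b (π k₁) / (1 - r (π k₁)) ≤ b (π k) / (1 - r (π k))) :
    F b r (π * Equiv.swap k k₁) ≤ F b r π := by
  set s := Equiv.swap k k₁ with hs
  have hkne : k ≠ k₁ := by
    intro h; rw [h] at hk; omega
  have hsk : s k = k₁ := Equiv.swap_apply_left _ _
  have hsk₁ : s k₁ = k := Equiv.swap_apply_right _ _
  have hso : ∀ j, j ≠ k → j ≠ k₁ → s j = j := fun j h1 h2 => Equiv.swap_apply_of_ne_of_ne h1 h2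
  set T : Equiv.Perm (Fin n) → Fin n → ℝ :=
    fun ρ i => b (ρ i) * ∏ j ∈ Finset.Iio i, r (ρ j) with hT
  have hterm : ∀ i, i ≠ k → i ≠ k₁ → T (π * s) i = T π i := by
    intro i h1 h2
    have hcase : (i : ℕ) < (k : ℕ) ∨ (k₁ : ℕ) < (i : ℕ) := by
      have e1 : (i : ℕ) ≠ (k : ℕ) := fun h => h1 (Fin.ext h)
      have e2 : (i : ℕ) ≠ (k₁ : ℕ) := fun h => h2 (Fin.ext h)
      omega
    have hsi : (π * s) i = π i := by
      simp [Equiv.Perm.mul_apply, hso i h1 h2]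
    rcases hcase with hlt | hgt
    · have : ∀ j ∈ Finset.Iio i, (π * s) j = π j := by
        intro j hj
        simp only [Finset.mem_Iio, Fin.lt_def] at hj
        have : s j = j := hso j (fun h => by rw [h] at hj; omega)
          (fun h => by rw [h] at hj; omega)
        simp [Equiv.Perm.mul_apply, this]
      simp only [hT, hsi]
      rw [Finset.prod_congr rfl (fun j hj => by rw [this j hj])]
    · have hprod : ∏ j ∈ Finset.Iio i, r ((π * s) j) = ∏ j ∈ Finset.Iio i, r (π j) := by
        apply Finset.prod_nbij' (fun j => s j) (fun j => s j)
        · intro j hj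
          simp only [Finset.mem_Iio, Fin.lt_def] at hj ⊢
          by_cases h1 : j = k
          · rw [h1, hsk]; omega
          by_cases h2 : j = k₁
          · rw [h2, hsk₁]; omega
          · rw [hso j h1 h2]; omega
        · intro j hj
          simp only [Finset.mem_Iio, Fin.lt_def] at hj ⊢
          by_cases h1 : j = k
          · rw [h1, hsk]; omega
          by_cases h2 : j = k₁
          · rw [h2, hsk₁]; omega
          · rw [hso j h1 h2]; omega
        · intro j _; exact Equiv.swap_apply_self _ _ j
        · intro j _; exact Equiv.swap_apply_self _ _ j
        · intro j _; simp [Equiv.Perm.mul_apply]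
      simp only [hT, hsi, hprod]
  -- key identity for the two positions
  have hkk₁ : k < k₁ := by rw [Fin.lt_def]; omega
  have hIio : Finset.Iio k₁ = insert k (Finset.Iio k) := by
    ext j
    simp only [Finset.mem_Iio, Finset.mem_insert, Fin.lt_def, Fin.ext_iff]
    omega
  set P : ℝ := ∏ j ∈ Finset.Iio k, r (π j) with hP
  have hprodk : ∏ j ∈ Finset.Iio k, r (π (s j)) = P := by
    apply Finset.prod_congr rfl
    intro j hj
    simp only [Finset.mem_Iio, Fin.lt_def] at hj
    have : s j = j := hso j (fun h => by rw [h] at hj; omega) (fun h => by rw [h] at hj; omega)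
    rw [this]
  have hTk : T (π * s) k = b (π k₁) * P := by
    simp only [hT, Equiv.Perm.mul_apply, hsk]
    rw [hprodk]
  have hTk₁ : T (π * s) k₁ = b (π k) * (r (π k₁) * P) := by
    simp only [hT, Equiv.Perm.mul_apply, hsk₁]
    congr 1
    rw [hIio, Finset.prod_insert (by simp)]
    rw [show π (s k) = π k₁ by rw [hsk], hprodk]
  have hTk' : T π k = b (π k) * P := rfl
  have hTk₁' : T π k₁ = b (π k₁) * (r (π k) * P) := by
    simp only [hT]
    rw [hIio, Finset.prod_insert (by simp)]
  -- sums
  have hsum : ∀ ρ : Equiv.Perm (Fin n),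
      F b r ρ = (∑ i ∈ (Finset.univ.erase k).erase k₁, T ρ i) + T ρ k₁ + T ρ k := by
    intro ρ
    have h1 : k₁ ∈ Finset.univ.erase k := Finset.mem_erase.2 ⟨Ne.symm hkne, Finset.mem_univ _⟩
    rw [Finset.sum_erase_add _ _ h1, Finset.sum_erase_add _ _ (Finset.mem_univ k)]
    rfl
  have hrest : ∑ i ∈ (Finset.univ.erase k).erase k₁, T (π * s) i
      = ∑ i ∈ (Finset.univ.erase k).erase k₁, T π i := by
    apply Finset.sum_congr rfl
    intro i hi
    simp only [Finset.mem_erase] at hi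
    exact hterm i hi.2.1 hi.1
  rw [hsum (π * s), hsum π, hrest, hTk, hTk₁, hTk', hTk₁']
  have hq1 : (0:ℝ) < 1 - r (π k) := by linarith [hr1 (π k)]
  have hq2 : (0:ℝ) < 1 - r (π k₁) := by linarith [hr1 (π k₁)]
  have hmul : b (π k₁) * (1 - r (π k)) ≤ b (π k) * (1 - r (π k₁)) :=
    (div_le_div_iff₀ hq2 hq1).1 hratio
  have hPnn : 0 ≤ P := Finset.prod_nonneg (fun j _ => hr (π j))
  nlinarith [mul_le_mul_of_nonneg_right hmul hPnn]

def invCount {n : ℕ} (π : Equiv.Perm (Fin n)) : ℕ :=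
  ((Finset.univ : Finset (Fin n × Fin n)).filter
    (fun x => x.1 < x.2 ∧ π x.2 < π x.1)).card

lemma descent_exists {n : ℕ} (π : Equiv.Perm (Fin n)) (hπ : π ≠ 1) :
    ∃ k k₁ : Fin n, (k : ℕ) + 1 = (k₁ : ℕ) ∧ π k₁ < π k := by
  by_contra h
  push_neg at h
  apply hπ
  have hmono : Monotone (π : Fin n → Fin n) := by
    cases n with
    | zero => intro a; exact absurd a.2 (by omega)
    | succ m =>
      rw [Fin.monotone_iff_le_succ]
      intro i
      have := h i.castSucc i.succ (by simp)
      exact le_of_not_gt (by simpa using this)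
  have hsm : StrictMono (π : Fin n → Fin n) := hmono.strictMono_of_injective π.injective
  have hrange : Set.range (π : Fin n → Fin n) = Set.range (id : Fin n → Fin n) := by
    rw [Set.range_id]
    exact Set.range_eq_univ.2 π.surjective
  haveI : WellFoundedLT (Fin n) := Finite.to_wellFoundedLT
  have := (StrictMono.range_inj (β := Fin n) (γ := Fin n) hsm (strictMono_id : StrictMono (id : Fin n → Fin n))).1 hrange
  exact Equiv.ext (fun x => congrFun this x)

lemma inv_decrease {n : ℕ} (π : Equiv.Perm (Fin n)) (k k₁ : Fin n)
    (hk : (k : ℕ) + 1 = (k₁ : ℕ)) (hd : π k₁ < π k) :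
    invCount (π * Equiv.swap k k₁) < invCount π := by
  set s := Equiv.swap k k₁ with hs
  have hkne : k ≠ k₁ := by intro h; rw [h] at hk; omega
  have hsk : s k = k₁ := Equiv.swap_apply_left _ _
  have hsk₁ : s k₁ = k := Equiv.swap_apply_right _ _
  have hsv : ∀ j : Fin n, (s j : ℕ) =
      if j = k then (k₁ : ℕ) else if j = k₁ then (k : ℕ) else (j : ℕ) := by
    intro j
    by_cases h1 : j = k
    · simp [h1, hsk]
    · by_cases h2 : j = k₁
      · simp [h1, h2, hsk₁, Ne.symm hkne]
      · simp [h1, h2, hs, Equiv.swap_apply_of_ne_of_ne h1 h2]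
  set Inv : Equiv.Perm (Fin n) → Finset (Fin n × Fin n) :=
    fun ρ => (Finset.univ : Finset (Fin n × Fin n)).filter
      (fun x => x.1 < x.2 ∧ ρ x.2 < ρ x.1) with hInv
  set e : Fin n × Fin n → Fin n × Fin n := fun x => (s x.1, s x.2) with he
  have heinj : Function.Injective e := by
    intro x y hxy
    simp only [he, Prod.ext_iff] at hxy ⊢
    exact ⟨s.injective hxy.1, s.injective hxy.2⟩
  have himg : (Inv (π * s)).image e ⊆ Inv π := by
    intro x hx
    obtain ⟨y, hy, rfl⟩ := Finset.mem_image.1 hx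
    simp only [hInv, Finset.mem_filter, Finset.mem_univ, true_and] at hy ⊢
    obtain ⟨hy1, hy2⟩ := hy
    simp only [Equiv.Perm.mul_apply] at hy2
    have hne : ¬(y.1 = k ∧ y.2 = k₁) := by
      rintro ⟨h1, h2⟩
      rw [h1, h2, hsk, hsk₁] at hy2
      exact absurd hy2 (not_lt.2 (le_of_lt hd))
    constructor
    · rw [Fin.lt_def, hsv, hsv]
      rw [Fin.lt_def] at hy1
      have e1 := Fin.ext_iff (a := y.1) (b := k)
      have e2 := Fin.ext_iff (a := y.1) (b := k₁)
      have e3 := Fin.ext_iff (a := y.2) (b := k)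
      have e4 := Fin.ext_iff (a := y.2) (b := k₁)
      have e5 : ¬(y.1 = k ∧ y.2 = k₁) := hne
      split_ifs with h1 h2 h3 h4 h3 h4 <;>
        simp_all <;> omega
    · exact hy2
  have hmem : (k, k₁) ∈ Inv π := by
    simp only [hInv, Finset.mem_filter, Finset.mem_univ, true_and]
    exact ⟨by rw [Fin.lt_def]; omega, hd⟩
  have hnot : (k, k₁) ∉ (Inv (π * s)).image e := by
    intro hmem'
    obtain ⟨y, hy, hye⟩ := Finset.mem_image.1 hmem'
    simp only [he, Prod.ext_iff] at hye
    have h1 : y.1 = k₁ := by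
      have := congrArg s hye.1
      rwa [Equiv.swap_apply_self, hsk] at this
    have h2 : y.2 = k := by
      have := congrArg s hye.2
      rwa [Equiv.swap_apply_self, hsk₁] at this
    simp only [hInv, Finset.mem_filter] at hy
    have := hy.2.1
    rw [h1, h2, Fin.lt_def] at this
    omega
  have hss : (Inv (π * s)).image e ⊂ Inv π :=
    (Finset.ssubset_iff_of_subset himg).2 ⟨(k, k₁), hmem, hnot⟩
  have := Finset.card_lt_card hss
  rwa [Finset.card_image_of_injective _ heinj] at this

lemma key {n : ℕ} (b r : Fin n → ℝ) (hb : ∀ i, 0 ≤ b i) (hr : ∀ i, 0 ≤ r i)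
    (hr1 : ∀ i, r i < 1)
    (hmono : ∀ i k : Fin n, i ≤ k → b i / (1 - r i) ≤ b k / (1 - r k)) :
    ∀ π : Equiv.Perm (Fin n), F b r 1 ≤ F b r π := by
  suffices H : ∀ N : ℕ, ∀ π : Equiv.Perm (Fin n), invCount π = N → F b r 1 ≤ F b r π by
    intro π; exact H (invCount π) π rfl
  intro N
  induction N using Nat.strong_induction_on with
  | _ N IH =>
    intro π hN
    by_cases hπ : π = 1
    · rw [hπ]
    · obtain ⟨k, k₁, hk, hd⟩ := descent_exists π hπ
      have hratio : b (π k₁) / (1 - r (π k₁)) ≤ b (π k) / (1 - r (π k)) :=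
        hmono _ _ (le_of_lt hd)
      have h1 := swap_le b r hb hr hr1 π k k₁ hk hratio
      have h2 := inv_decrease π k k₁ hk hd
      rw [hN] at h2
      exact le_trans (IH _ h2 _ rfl) h1

/-- If the ratios `(w₁ * c (σ i) + w₂ * t (σ i)) / q (σ i)` are nondecreasing along the
sequence `σ`, then `σ` minimizes the weighted fitness of the series system. -/
theorem weighted_series_ratio_sequence_optimal {n : ℕ} (c t p q : Fin n → ℝ)
    (w₁ w₂ : ℝ) (hw₁ : 0 ≤ w₁) (hw₂ : 0 ≤ w₂)
    (hc : ∀ i, 0 ≤ c i) (ht : ∀ i, 0 ≤ t i)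
    (hp : ∀ i, 0 ≤ p i) (hp1 : ∀ i, p i < 1) (hq : ∀ i, q i = 1 - p i)
    (σ : Equiv.Perm (Fin n))
    (hσ : ∀ i k : Fin n, i ≤ k →
      (w₁ * c (σ i) + w₂ * t (σ i)) / q (σ i) ≤
        (w₁ * c (σ k) + w₂ * t (σ k)) / q (σ k)) :
    ∀ τ : Equiv.Perm (Fin n),
      weightedFitness w₁ w₂ c t p σ ≤ weightedFitness w₁ w₂ c t p τ := by
  intro τ
  set b : Fin n → ℝ := fun i => w₁ * c (σ i) + w₂ * t (σ i) with hb'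
  set r : Fin n → ℝ := fun i => p (σ i) with hr'
  have hb : ∀ i, 0 ≤ b i := fun i =>
    add_nonneg (mul_nonneg hw₁ (hc _)) (mul_nonneg hw₂ (ht _))
  have hr : ∀ i, 0 ≤ r i := fun i => hp _
  have hr1 : ∀ i, r i < 1 := fun i => hp1 _
  have hmono : ∀ i k : Fin n, i ≤ k → b i / (1 - r i) ≤ b k / (1 - r k) := by
    intro i k hik
    have := hσ i k hik
    rwa [hq (σ i), hq (σ k)] at this
  have h1 : weightedFitness w₁ w₂ c t p σ = F b r 1 := by
    simp [weightedFitness, F, hb', hr']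
  have h2 : weightedFitness w₁ w₂ c t p τ = F b r (σ⁻¹ * τ) := by
    simp only [weightedFitness, F, Equiv.Perm.mul_apply, hb', hr',
      Equiv.Perm.inv_def, Equiv.apply_symm_apply]
  rw [h1, h2]
  exact key b r hb hr hr1 hmono (σ⁻¹ * τ)
end
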